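/- Let R = ℂ[x_1,…,x_n], let I ⊆ R be an ideal, let i ∈ {1,…,n} and d ∈ ℕ. Then the contraction by the variable x_i of the truncated dual space of order d+1 lands in the truncated dual space of order d of the colon ideal: x_i∘D_0^{d+1}[I] ⊆ D_0^d[I : ⟨x_i⟩]. -/

import Mathlib

open MvPolynomial

noncomputable section

/-- Apolarity pairing `⟨q, f⟩ = ∑ α (coeff α q) * (coeff α f)`. -/
def apair {n : ℕ} (q f : MvPolynomial (Fin n) ℂ) : ℂ :=
  ∑ α ∈ q.support, q.coeff α * f.coeff α

lemma apair_eq_sum {n : ℕ} {q : MvPolynomial (Fin n) ℂ} {s : Finset (Fin n →₀ ℕ)}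
    (h : q.support ⊆ s) (f : MvPolynomial (Fin n) ℂ) :
    apair q f = ∑ α ∈ s, q.coeff α * f.coeff α :=
  Finset.sum_subset h (fun α _ hα => by
    rw [MvPolynomial.notMem_support_iff.mp hα, zero_mul])

/-- The Macaulay dual space `D_0[I]` of an ideal at the origin. -/
def dualSpace {n : ℕ} (I : Ideal (MvPolynomial (Fin n) ℂ)) :
    Submodule ℂ (MvPolynomial (Fin n) ℂ) where
  carrier := {q | ∀ f ∈ I, apair q f = 0}
  zero_mem' := by intro f hf; simp [apair]
  add_mem' := by
    intro a b ha hb f hf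
    have h : apair (a + b) f = apair a f + apair b f := by
      rw [apair_eq_sum (s := a.support ∪ b.support) MvPolynomial.support_add,
        apair_eq_sum (s := a.support ∪ b.support) Finset.subset_union_left,
        apair_eq_sum (s := a.support ∪ b.support) Finset.subset_union_right,
        ← Finset.sum_add_distrib]
      exact Finset.sum_congr rfl fun α _ => by rw [coeff_add, add_mul]
    rw [h, ha f hf, hb f hf, add_zero]
  smul_mem' := by
    intro c q hq f hf
    have h : apair (c • q) f = c * apair q f := by
      rw [apair_eq_sum (s := q.support) MvPolynomial.support_smul, apair, Finset.mul_sum]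
      exact Finset.sum_congr rfl fun α _ => by rw [coeff_smul, smul_eq_mul, mul_assoc]
    rw [h, hq f hf, mul_zero]

open scoped Classical in
/-- The contraction `g ∘ q`, realizing the action of `g` on differential functionals:
`coeff α (contract g q) = ∑ β, coeff β g * coeff (α + β) q`. -/
def contract {n : ℕ} (g q : MvPolynomial (Fin n) ℂ) : MvPolynomial (Fin n) ℂ :=
  ∑ β ∈ g.support, ∑ α ∈ q.support,
    if β ≤ α then monomial (α - β) (g.coeff β * q.coeff α) else 0

/-- The truncated dual space `D_0^k[I]`. -/
def truncDual {n : ℕ} (k : ℕ) (I : Ideal (MvPolynomial (Fin n) ℂ)) :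
    Submodule ℂ (MvPolynomial (Fin n) ℂ) where
  carrier := {q | q ∈ dualSpace I ∧ q.totalDegree ≤ k}
  zero_mem' := ⟨(dualSpace I).zero_mem, by simp⟩
  add_mem' := fun ha hb => ⟨(dualSpace I).add_mem ha.1 hb.1,
    le_trans (MvPolynomial.totalDegree_add _ _) (max_le ha.2 hb.2)⟩
  smul_mem' := fun c q hq => ⟨(dualSpace I).smul_mem c hq.1,
    le_trans (MvPolynomial.totalDegree_smul_le c q) hq.2⟩


lemma coeff_contract_X {n : ℕ} (i : Fin n) (q : MvPolynomial (Fin n) ℂ)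
    (γ : Fin n →₀ ℕ) :
    (contract (X i) q).coeff γ = q.coeff (γ + Finsupp.single i 1) := by
  classical
  set e := Finsupp.single i 1 with he
  have hc : contract (X i) q =
      ∑ α ∈ q.support, if e ≤ α then monomial (α - e) (q.coeff α) else 0 := by
    rw [contract, MvPolynomial.support_X, Finset.sum_singleton]
    refine Finset.sum_congr rfl fun α _ => ?_
    rw [MvPolynomial.coeff_X, if_pos rfl, one_mul]
  have hterm : ∀ α ∈ q.support,
      MvPolynomial.coeff γ (if e ≤ α then monomial (α - e) (q.coeff α) else 0)
        = if α = γ + e then q.coeff α else 0 := by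
    intro α _
    by_cases h1 : e ≤ α
    · rw [if_pos h1, MvPolynomial.coeff_monomial]
      by_cases h2 : α - e = γ
      · have h3 : α = γ + e := by rw [← h2, tsub_add_cancel_of_le h1]
        rw [if_pos h2, if_pos h3]
      · have h3 : ¬ α = γ + e := fun h => h2 (by rw [h, add_tsub_cancel_right])
        rw [if_neg h2, if_neg h3]
    · rw [if_neg h1, MvPolynomial.coeff_zero]
      have h3 : ¬ α = γ + e := fun h => h1 (by rw [h]; exact le_add_self)
      rw [if_neg h3]
  rw [hc, MvPolynomial.coeff_sum, Finset.sum_congr rfl hterm,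
    Finset.sum_ite_eq' q.support (γ + e) q.coeff]
  by_cases h : γ + e ∈ q.support
  · rw [if_pos h]
  · rw [if_neg h, MvPolynomial.notMem_support_iff.mp h]

lemma apair_contract_X {n : ℕ} (i : Fin n) (q f : MvPolynomial (Fin n) ℂ) :
    apair (contract (X i) q) f = apair q (X i * f) := by
  classical
  set e := Finsupp.single i 1 with he
  set c := contract (X i) q with hcdef
  have hc : ∀ γ, c.coeff γ = q.coeff (γ + e) := coeff_contract_X i q
  have hmul : ∀ α : Fin n →₀ ℕ, (X i * f).coeff α =
      if e ≤ α then f.coeff (α - e) else 0 := by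
    intro α
    rw [MvPolynomial.coeff_X_mul']
    congr 1
    simp [he, Finsupp.single_le_iff, Finsupp.mem_support_iff, Nat.one_le_iff_ne_zero]
  have hR : apair q (X i * f)
      = ∑ α ∈ q.support.filter (fun α => e ≤ α), q.coeff α * f.coeff (α - e) := by
    rw [apair, Finset.sum_filter]
    refine Finset.sum_congr rfl fun α _ => ?_
    rw [hmul α]
    split_ifs <;> simp
  rw [hR, apair]
  refine Finset.sum_nbij' (fun γ => γ + e) (fun α => α - e) ?_ ?_ ?_ ?_ ?_
  · intro γ hγ
    rw [Finset.mem_filter, MvPolynomial.mem_support_iff]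
    refine ⟨?_, le_add_self⟩
    rw [← hc γ]
    exact MvPolynomial.mem_support_iff.mp hγ
  · intro α hα
    rw [Finset.mem_filter] at hα
    rw [MvPolynomial.mem_support_iff, hc, tsub_add_cancel_of_le hα.2]
    exact MvPolynomial.mem_support_iff.mp hα.1
  · intro γ _; exact add_tsub_cancel_right γ e
  · intro α hα
    rw [Finset.mem_filter] at hα
    exact tsub_add_cancel_of_le hα.2
  · intro γ _
    rw [hc γ, add_tsub_cancel_right]

lemma totalDegree_contract_X_le {n : ℕ} (i : Fin n) (q : MvPolynomial (Fin n) ℂ)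
    {d : ℕ} (h : q.totalDegree ≤ d + 1) :
    (contract (X i) q).totalDegree ≤ d := by
  rw [MvPolynomial.totalDegree]
  apply Finset.sup_le
  intro γ hγ
  have h1 : q.coeff (γ + Finsupp.single i 1) ≠ 0 := by
    rw [← coeff_contract_X]; exact MvPolynomial.mem_support_iff.mp hγ
  have h2 := MvPolynomial.le_totalDegree (MvPolynomial.mem_support_iff.mpr h1)
  have h3 : ((γ + Finsupp.single i 1).sum fun _ e => e)
      = (γ.sum fun _ e => e) + 1 := by
    rw [Finsupp.sum_add_index' (fun _ => rfl) (fun _ _ _ => rfl),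
      Finsupp.sum_single_index rfl]
  omega

/-- `xᵢ ∘ D_0^{d+1}[I] ⊆ D_0^d[I : ⟨xᵢ⟩]`. -/
theorem contract_X_truncDual_subset (n : ℕ) (I : Ideal (MvPolynomial (Fin n) ℂ))
    (i : Fin n) (d : ℕ) :
    contract (X i) '' (truncDual (d + 1) I : Set (MvPolynomial (Fin n) ℂ)) ⊆
      (truncDual d (Submodule.colon I
        ((Ideal.span {X i} : Ideal (MvPolynomial (Fin n) ℂ)) : Set (MvPolynomial (Fin n) ℂ))) :
        Set (MvPolynomial (Fin n) ℂ)) := by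
  rintro _ ⟨q, hq, rfl⟩
  refine ⟨?_, totalDegree_contract_X_le i q hq.2⟩
  intro f hf
  rw [apair_contract_X]
  have hXf : X i * f ∈ I := by
    have h := Submodule.mem_colon.mp hf (X i) (Ideal.subset_span (Set.mem_singleton _))
    rwa [smul_eq_mul, mul_comm] at h
  exact hq.1 _ hXf
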